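/- For every ϱ > 0 and every θ with −2ϱ < θ < 2ϱ, there exists a constant C > 0 such that for all v, η ∈ ℝ³ with η ≠ 0: −ϱ|η|² − ϱ(|η|² − 2 v·η)²/|η|² − θ(|η|² − 2 v·η) ≤ −C(|η|² + |v·η|). -/

import Mathlib

noncomputable section

open Real

/-- Euclidean 3-space. -/
abbrev E3 : Type := EuclideanSpace ℝ (Fin 3)

lemma grad_poly_ineq (ϱ θ r s : ℝ) (hϱ : 0 < ϱ) (hθ : |θ| < 2 * ϱ)
    (hr : 0 < r) :
    (2 * ϱ - |θ|) / 4 * (r ^ 2 + r * |s|)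
      ≤ ϱ * r ^ 2 + ϱ * (r - 2 * s) ^ 2 + θ * (r * (r - 2 * s)) := by
  have h1 : 2 * ϱ - θ > 0 := by cases abs_lt.1 hθ; linarith
  have h2 : 2 * ϱ + θ > 0 := by cases abs_lt.1 hθ; linarith
  rcases abs_cases θ with ⟨ht, _⟩ | ⟨ht, _⟩ <;> rw [ht] <;>
    rcases abs_cases s with ⟨hs, _⟩ | ⟨hs, _⟩ <;> rw [hs] <;>
    nlinarith [sq_nonneg (r + (r - 2 * s)), sq_nonneg (r - (r - 2 * s)),
      mul_nonneg h1.le (sq_nonneg (r + (r - 2 * s))),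
      mul_nonneg h1.le (sq_nonneg (r - (r - 2 * s))),
      mul_nonneg h2.le (sq_nonneg (r + (r - 2 * s))),
      mul_nonneg h2.le (sq_nonneg (r - (r - 2 * s))),
      mul_pos hr hr, sq_nonneg (r - 2 * s), hr.le]

/-- Negative definiteness of the total exponent in the proof of the Grad kernel
estimate (Lemma 2.2), after the change of variables `u = v − η`. -/
theorem grad_kernel_exponent_negativity
    (ϱ θ : ℝ) (hϱ : 0 < ϱ) (hθ₁ : -(2 * ϱ) < θ) (hθ₂ : θ < 2 * ϱ) :
    ∃ C > 0, ∀ v η : E3, η ≠ 0 →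
      -ϱ * ‖η‖ ^ 2 - ϱ * (‖η‖ ^ 2 - 2 * (inner ℝ v η : ℝ)) ^ 2 / ‖η‖ ^ 2
          - θ * (‖η‖ ^ 2 - 2 * (inner ℝ v η : ℝ))
        ≤ -C * (‖η‖ ^ 2 + |(inner ℝ v η : ℝ)|) := by
  have hθ : |θ| < 2 * ϱ := abs_lt.2 ⟨by linarith, hθ₂⟩
  refine ⟨(2 * ϱ - |θ|) / 4, by have := abs_nonneg θ; linarith, ?_⟩
  intro v η hη
  set r := ‖η‖ ^ 2 with hrdef
  set s : ℝ := inner ℝ v η with hsdef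
  have hη' : ‖η‖ ≠ 0 := norm_ne_zero_iff.2 hη
  have hr : 0 < r := by positivity
  have key := grad_poly_ineq ϱ θ r s hϱ hθ hr
  have h2 : -ϱ * r - ϱ * (r - 2 * s) ^ 2 / r - θ * (r - 2 * s)
      = (-(ϱ * r ^ 2) - ϱ * (r - 2 * s) ^ 2 - θ * (r * (r - 2 * s))) / r := by
    field_simp
  rw [h2, div_le_iff₀ hr]
  nlinarith [key]
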